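/- arXiv:1310.0895 — 4 statements merged into one kernel-verified Lean document; each statement's English description precedes it below -/
import Mathlib

section
/- Let A be the associative algebra over ℤ[β] generated by u₁,...,u_{n-1} subject to u_i u_j = u_j u_i for |i-j| ≥ 2, u_i u_{i+1} u_i = u_{i+1} u_i u_{i+1}, and u_i² = β u_i. Setting h_i(x) = 1 + x·u_i, one has the Yang–Baxter-type relation h_i(x) h_{i+1}(x ⊕ y) h_i(y) = h_{i+1}(y) h_i(x ⊕ y) h_{i+1}(x), where x ⊕ y = x + y + βxy. -/
/-- Yang–Baxter-type relation in the Hecke-type algebra.  If `u = u_i` and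
`v = u_{i+1}` satisfy the braid relation `uvu = vuv` and the Hecke relations
`u² = βu`, `v² = βv`, then with `h(x,w) = 1 + x·w` and `x ⊕ y = x + y + βxy` one has
`h_i(x) h_{i+1}(x⊕y) h_i(y) = h_{i+1}(y) h_i(x⊕y) h_{i+1}(x)`. -/
theorem yang_baxter {S : Type*} [CommRing S] {A : Type*} [Ring A] [Algebra S A]
    (β x y : S) (u v : A)
    (hbraid : u * v * u = v * u * v)
    (hu : u * u = β • u) (hv : v * v = β • v) :
    (1 + x • u) * (1 + (x + y + β * x * y) • v) * (1 + y • u) =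
      (1 + y • v) * (1 + (x + y + β * x * y) • u) * (1 + x • v) := by
  simp only [mul_add, add_mul, one_mul, mul_one, smul_mul_smul_comm, smul_mul_assoc,
    mul_smul_comm, smul_smul, hu, hv, mul_assoc] at *
  rw [hbraid]
  module
end

section
/- The β-divided difference operators satisfy the braid relations: φ_i φ_{i+1} φ_i = φ_{i+1} φ_i φ_{i+1} for 1 ≤ i ≤ n-2, and φ_i φ_j = φ_j φ_i whenever |i-j| ≥ 2. -/
open MvPolynomial

/-- `IsDD β a b P Q` asserts that `Q` is the β-divided difference `φ(P)` with respect
to the variables `x_a`, `x_b`, i.e. `(x_a - x_b)·Q = (1+βx_b)P - (1+βx_a)σ(P)`. -/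
def IsDD {R : Type*} [CommRing R] {n : ℕ} (β : R) (a b : Fin n)
    (P Q : MvPolynomial (Fin n) R) : Prop :=
  (X a - X b) * Q =
    (1 + C β * X b) * P - (1 + C β * X a) * rename (Equiv.swap a b) P

private lemma isRegular_of_algEquiv {R A B : Type*} [CommSemiring R] [Semiring A] [Semiring B]
    [Algebra R A] [Algebra R B] (e : A ≃ₐ[R] B) {x : A} (h : IsRegular (e x)) : IsRegular x := by
  constructor
  · intro y z hyz
    exact e.injective (h.left (show e x * e y = e x * e z by
      rw [← map_mul, ← map_mul]; exact congrArg e hyz))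
  · intro y z hyz
    exact e.injective (h.right (show e y * e x = e z * e x by
      rw [← map_mul, ← map_mul]; exact congrArg e hyz))

private lemma isRegular_X_sub_X {R : Type*} [CommRing R] {n : ℕ} {a b : Fin n} (hab : a ≠ b) :
    IsRegular (X a - X b : MvPolynomial (Fin n) R) := by
  cases n with
  | zero => exact a.elim0
  | succ m =>
    have hb0 : Equiv.swap a 0 b ≠ 0 := by
      rcases eq_or_ne b 0 with rfl | hb
      · rw [Equiv.swap_apply_right]; exact hab
      · rw [Equiv.swap_apply_of_ne_of_ne hab.symm hb]; exact hb
    apply isRegular_of_algEquiv ((renameEquiv R (Equiv.swap a 0)).trans (finSuccEquiv R m))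
    obtain ⟨j, hj⟩ : ∃ j : Fin m, Equiv.swap a 0 b = Fin.succ j :=
      ⟨(Equiv.swap a 0 b).pred hb0, (Fin.succ_pred _ hb0).symm⟩
    have key : ((renameEquiv R (Equiv.swap a 0)).trans (finSuccEquiv R m)) (X a - X b) =
        Polynomial.X - Polynomial.C (X j) := by
      rw [map_sub]
      congr 1
      · show (finSuccEquiv R m) (rename (Equiv.swap a 0) (X a)) = _
        rw [rename_X, Equiv.swap_apply_left, finSuccEquiv_X_zero]
      · show (finSuccEquiv R m) (rename (Equiv.swap a 0) (X b)) = _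
        rw [rename_X, hj, finSuccEquiv_X_succ]
    rw [key]
    exact (Polynomial.monic_X_sub_C _).isRegular

private lemma braid_key {R : Type*} [CommRing R] {n : ℕ} (β : R) {a b c : Fin n}
    (hab : a ≠ b) (hbc : b ≠ c) (hac : a ≠ c)
    {P Q₁ Q₂ Q₃ R₁ R₂ R₃ : MvPolynomial (Fin n) R}
    (h1 : IsDD β a b P Q₁) (h2 : IsDD β b c Q₁ Q₂) (h3 : IsDD β a b Q₂ Q₃)
    (h4 : IsDD β b c P R₁) (h5 : IsDD β a b R₁ R₂) (h6 : IsDD β b c R₂ R₃) :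
    Q₃ = R₃ := by
  unfold IsDD at h1 h2 h3 h4 h5 h6
  have app : ∀ (σ : Equiv.Perm (Fin n)) {x y : MvPolynomial (Fin n) R}, x = y →
      rename (⇑σ) x = rename (⇑σ) y := fun σ {x y} h => by rw [h]
  have tE1 := app (Equiv.swap b c) h1
  have sE1 := app (Equiv.swap a b) h1
  have sE2 := app (Equiv.swap a b) h2
  have sE4 := app (Equiv.swap a b) h4
  have tE4 := app (Equiv.swap b c) h4
  have tE5 := app (Equiv.swap b c) h5
  simp only [map_sub, map_add, map_mul, map_one, rename_X, rename_C,
    Equiv.swap_apply_left, Equiv.swap_apply_right,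
    Equiv.swap_apply_of_ne_of_ne hab hac, Equiv.swap_apply_of_ne_of_ne hac.symm hbc.symm]
    at tE1 sE1 sE2 sE4 tE4 tE5
  have stE1 := app (Equiv.swap a b) tE1
  have tsE4 := app (Equiv.swap b c) sE4
  simp only [map_sub, map_add, map_mul, map_one, rename_X, rename_C,
    Equiv.swap_apply_left, Equiv.swap_apply_right,
    Equiv.swap_apply_of_ne_of_ne hab hac, Equiv.swap_apply_of_ne_of_ne hac.symm hbc.symm]
    at stE1 tsE4
  have hss : rename (⇑(Equiv.swap a b)) (rename (⇑(Equiv.swap a b)) P) = P := by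
    rw [rename_rename, ← Equiv.Perm.coe_mul, Equiv.swap_mul_self, Equiv.Perm.coe_one, rename_id, AlgHom.id_apply]
  have htt : rename (⇑(Equiv.swap b c)) (rename (⇑(Equiv.swap b c)) P) = P := by
    rw [rename_rename, ← Equiv.Perm.coe_mul, Equiv.swap_mul_self, Equiv.Perm.coe_one, rename_id, AlgHom.id_apply]
  have hperm : Equiv.swap a b * Equiv.swap b c * Equiv.swap a b
      = Equiv.swap b c * Equiv.swap a b * Equiv.swap b c := by
    calc Equiv.swap a b * Equiv.swap b c * Equiv.swap a b
        = Equiv.swap b a * Equiv.swap c b * Equiv.swap b a := by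
          rw [Equiv.swap_comm a b, Equiv.swap_comm b c]
      _ = Equiv.swap a c := Equiv.swap_mul_swap_mul_swap hbc.symm hac.symm
      _ = Equiv.swap c a := Equiv.swap_comm a c
      _ = Equiv.swap b c * Equiv.swap a b * Equiv.swap b c :=
          (Equiv.swap_mul_swap_mul_swap hab hac).symm
  have hW : rename (⇑(Equiv.swap a b)) (rename (⇑(Equiv.swap b c)) (rename (⇑(Equiv.swap a b)) P))
      = rename (⇑(Equiv.swap b c)) (rename (⇑(Equiv.swap a b)) (rename (⇑(Equiv.swap b c)) P)) := by
    rw [rename_rename, rename_rename, rename_rename, rename_rename,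
      ← Equiv.Perm.coe_mul, ← Equiv.Perm.coe_mul, ← Equiv.Perm.coe_mul, ← Equiv.Perm.coe_mul,
      hperm]
  have hreg : IsRegular (((X a - X b) * (X b - X c) * (X a - X c)) ^ 2 :
      MvPolynomial (Fin n) R) :=
    (((isRegular_X_sub_X hab).mul (isRegular_X_sub_X hbc)).mul (isRegular_X_sub_X hac)).pow 2
  apply hreg.left
  show ((X a - X b) * (X b - X c) * (X a - X c)) ^ 2 * Q₃
      = ((X a - X b) * (X b - X c) * (X a - X c)) ^ 2 * R₃
  linear_combination
      ((X a - X b) * (X b - X c) ^ 2 * (X a - X c) ^ 2) * h3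
    + ((X a - X b) * (X b - X c) * (X a - X c) ^ 2 * (1 + C β * X b)) * h2
    - ((X a - X b) * (X b - X c) ^ 2 * (X a - X c) * (1 + C β * X a)) * sE2
    + ((X b - X c) * (X a - X c) ^ 2 * (1 + C β * X b) * (1 + C β * X c)) * h1
    - ((X a - X b) * (X b - X c) * (X a - X c) * (1 + C β * X b) ^ 2) * tE1
    + ((X b - X c) ^ 2 * (X a - X c) * (1 + C β * X a) * (1 + C β * X c)) * sE1
    + ((X a - X b) * (X b - X c) * (X a - X c) * (1 + C β * X a) ^ 2) * stE1
    - ((X a - X b) ^ 2 * (X b - X c) * (X a - X c) ^ 2) * h6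
    - ((X a - X b) * (X b - X c) * (X a - X c) ^ 2 * (1 + C β * X c)) * h5
    + ((X a - X b) ^ 2 * (X b - X c) * (X a - X c) * (1 + C β * X b)) * tE5
    - ((X a - X b) * (X a - X c) ^ 2 * (1 + C β * X b) * (1 + C β * X c)) * h4
    + ((X a - X b) * (X b - X c) * (X a - X c) * (1 + C β * X a) * (1 + C β * X c)) * sE4
    - ((X a - X b) ^ 2 * (X a - X c) * (1 + C β * X b) * (1 + C β * X c)) * tE4
    - ((X a - X b) * (X b - X c) * (X a - X c) * (1 + C β * X a) * (1 + C β * X b)) * tsE4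
    - ((X b - X c) ^ 2 * (X a - X c) * (1 + C β * X a) * (1 + C β * X b) * (1 + C β * X c)) * hss
    + ((X a - X b) ^ 2 * (X a - X c) * (1 + C β * X b) * (1 + C β * X c) ^ 2) * htt
    - ((X a - X b) * (X b - X c) * (X a - X c) * (1 + C β * X a) ^ 2 * (1 + C β * X b)) * hW

private lemma comm_key {R : Type*} [CommRing R] {n : ℕ} (β : R) {a b c d : Fin n}
    (hab : a ≠ b) (hcd : c ≠ d) (hac : a ≠ c) (had : a ≠ d) (hbc : b ≠ c) (hbd : b ≠ d)
    {P Q₁ Q₂ R₁ R₂ : MvPolynomial (Fin n) R}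
    (h1 : IsDD β a b P Q₁) (h2 : IsDD β c d Q₁ Q₂)
    (h3 : IsDD β c d P R₁) (h4 : IsDD β a b R₁ R₂) :
    Q₂ = R₂ := by
  unfold IsDD at h1 h2 h3 h4
  have app : ∀ (σ : Equiv.Perm (Fin n)) {x y : MvPolynomial (Fin n) R}, x = y →
      rename (⇑σ) x = rename (⇑σ) y := fun σ {x y} h => by rw [h]
  have tE1 := app (Equiv.swap c d) h1
  have sE3 := app (Equiv.swap a b) h3
  simp only [map_sub, map_add, map_mul, map_one, rename_X, rename_C,
    Equiv.swap_apply_of_ne_of_ne hac had, Equiv.swap_apply_of_ne_of_ne hbc hbd,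
    Equiv.swap_apply_of_ne_of_ne hac.symm hbc.symm,
    Equiv.swap_apply_of_ne_of_ne had.symm hbd.symm] at tE1 sE3
  have hdis : (Equiv.swap a b).Disjoint (Equiv.swap c d) := by
    intro x
    rcases eq_or_ne x a with rfl | hxa
    · exact Or.inr (Equiv.swap_apply_of_ne_of_ne hac had)
    rcases eq_or_ne x b with rfl | hxb
    · exact Or.inr (Equiv.swap_apply_of_ne_of_ne hbc hbd)
    · exact Or.inl (Equiv.swap_apply_of_ne_of_ne hxa hxb)
  have hcomm : rename (⇑(Equiv.swap c d)) (rename (⇑(Equiv.swap a b)) P)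
      = rename (⇑(Equiv.swap a b)) (rename (⇑(Equiv.swap c d)) P) := by
    rw [rename_rename, rename_rename, ← Equiv.Perm.coe_mul, ← Equiv.Perm.coe_mul,
      hdis.commute.eq]
  have hreg : IsRegular (((X a - X b) * (X c - X d)) : MvPolynomial (Fin n) R) :=
    (isRegular_X_sub_X hab).mul (isRegular_X_sub_X hcd)
  apply hreg.left
  show ((X a - X b) * (X c - X d)) * Q₂ = ((X a - X b) * (X c - X d)) * R₂
  linear_combination
      (X a - X b) * h2
    + (1 + C β * X d) * h1
    - (1 + C β * X c) * tE1
    - (X c - X d) * h4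
    - (1 + C β * X b) * h3
    + (1 + C β * X a) * sE3
    + ((1 + C β * X a) * (1 + C β * X c)) * hcomm

/-- The β-divided difference operators satisfy the braid relations:
`φ_i φ_{i+1} φ_i = φ_{i+1} φ_i φ_{i+1}`, and `φ_i φ_j = φ_j φ_i` whenever
`|i - j| ≥ 2`. -/
theorem beta_dd_braid_relations {R : Type*} [CommRing R] (β : R) (n : ℕ) :
    (∀ (i : ℕ) (h2 : i + 2 < n) (P Q₁ Q₂ Q₃ R₁ R₂ R₃ : MvPolynomial (Fin n) R),
      IsDD β ⟨i, by omega⟩ ⟨i + 1, by omega⟩ P Q₁ →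
      IsDD β ⟨i + 1, by omega⟩ ⟨i + 2, h2⟩ Q₁ Q₂ →
      IsDD β ⟨i, by omega⟩ ⟨i + 1, by omega⟩ Q₂ Q₃ →
      IsDD β ⟨i + 1, by omega⟩ ⟨i + 2, h2⟩ P R₁ →
      IsDD β ⟨i, by omega⟩ ⟨i + 1, by omega⟩ R₁ R₂ →
      IsDD β ⟨i + 1, by omega⟩ ⟨i + 2, h2⟩ R₂ R₃ →
      Q₃ = R₃) ∧
    (∀ (i j : ℕ) (hij : i + 2 ≤ j ∨ j + 2 ≤ i) (hi : i + 1 < n) (hj : j + 1 < n)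
      (P Q₁ Q₂ R₁ R₂ : MvPolynomial (Fin n) R),
      IsDD β ⟨i, by omega⟩ ⟨i + 1, hi⟩ P Q₁ →
      IsDD β ⟨j, by omega⟩ ⟨j + 1, hj⟩ Q₁ Q₂ →
      IsDD β ⟨j, by omega⟩ ⟨j + 1, hj⟩ P R₁ →
      IsDD β ⟨i, by omega⟩ ⟨i + 1, hi⟩ R₁ R₂ →
      Q₂ = R₂) := by
  constructor
  · intro i h2 P Q₁ Q₂ Q₃ R₁ R₂ R₃ e1 e2 e3 e4 e5 e6
    exact braid_key β (Fin.ne_of_val_ne (by simp only [Fin.val_mk]; omega)) (Fin.ne_of_val_ne (by simp only [Fin.val_mk]; omega))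
      (Fin.ne_of_val_ne (by simp only [Fin.val_mk]; omega)) e1 e2 e3 e4 e5 e6
  · intro i j hij hi hj P Q₁ Q₂ R₁ R₂ e1 e2 e3 e4
    exact comm_key β (Fin.ne_of_val_ne (by simp only [Fin.val_mk]; omega)) (Fin.ne_of_val_ne (by simp only [Fin.val_mk]; omega))
      (Fin.ne_of_val_ne (by simp only [Fin.val_mk]; omega)) (Fin.ne_of_val_ne (by simp only [Fin.val_mk]; omega))
      (Fin.ne_of_val_ne (by simp only [Fin.val_mk]; omega)) (Fin.ne_of_val_ne (by simp only [Fin.val_mk]; omega)) e1 e2 e3 e4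
end

section
/- The double β-polynomials satisfy the symmetry 𝔥_{ω⁻¹}(x, y) = 𝔥_ω(y, x) for every permutation ω ∈ S_n, where 𝔥_ω denotes the double β-polynomial H_ω(x,y). -/
/-- The length (number of inversions) of a permutation of `Fin n`. -/
def len {n : ℕ} (ω : Equiv.Perm (Fin n)) : ℕ :=
  (Finset.univ.filter fun p : Fin n × Fin n => p.1 < p.2 ∧ ω p.2 < ω p.1).card

/-- The elementary transposition `s_i = (i, i+1)` in `S_n` (0-indexed). -/
def sgen (n i : ℕ) (hi : i + 1 < n) : Equiv.Perm (Fin n) :=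
  Equiv.swap ⟨i, by omega⟩ ⟨i + 1, hi⟩

/-- `h_i(t) = 1 + t·u_i`. -/
noncomputable def hh {S : Type*} [CommRing S] {A : Type*} [Ring A] [Algebra S A]
    (u : ℕ → A) (i : ℕ) (t : S) : A :=
  1 + t • u i

/-- `α_i(t) = h_{n-2}(t) ⋯ h_i(t)` (0-indexed version of `h_{n-1}(t) ⋯ h_i(t)`). -/
noncomputable def alpha {S : Type*} [CommRing S] {A : Type*} [Ring A] [Algebra S A]
    (n : ℕ) (u : ℕ → A) (i : ℕ) (t : S) : A :=
  ((List.range (n - 1 - i)).map fun k => hh u (n - 2 - k) t).prod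

/-- `α̃_i(t) = h_i(t) ⋯ h_{n-2}(t)`. -/
noncomputable def alphaT {S : Type*} [CommRing S] {A : Type*} [Ring A] [Algebra S A]
    (n : ℕ) (u : ℕ → A) (i : ℕ) (t : S) : A :=
  ((List.range (n - 1 - i)).map fun k => hh u (i + k) t).prod

/-- `H(x) = α_0(x_0) α_1(x_1) ⋯ α_{n-2}(x_{n-2})`. -/
noncomputable def Hx {S : Type*} [CommRing S] {A : Type*} [Ring A] [Algebra S A]
    (n : ℕ) (u : ℕ → A) (x : ℕ → S) : A :=
  ((List.range (n - 1)).map fun i => alpha n u i (x i)).prod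

/-- `H̃(y) = α̃_{n-2}(y_{n-2}) ⋯ α̃_0(y_0)`. -/
noncomputable def Ht {S : Type*} [CommRing S] {A : Type*} [Ring A] [Algebra S A]
    (n : ℕ) (u : ℕ → A) (y : ℕ → S) : A :=
  ((List.range (n - 1)).map fun i => alphaT n u (n - 2 - i) (y (n - 2 - i))).prod

lemma sgen_lt {n j : ℕ} (hj : j + 1 < n) {a c : Fin n} (hac : a < c)
    (h : ¬(a.1 = j ∧ c.1 = j + 1)) : sgen n j hj a < sgen n j hj c := by
  simp only [sgen, Equiv.swap_apply_def]
  have := a.2; have := c.2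
  rw [Fin.lt_def] at hac
  split_ifs with h1 h2 h3 h4 h5 h6 <;>
    simp only [Fin.ext_iff, Fin.lt_def] at * <;> omega

lemma sgen_apply_j {n j : ℕ} (hj : j + 1 < n) :
    sgen n j hj ⟨j, by omega⟩ = ⟨j + 1, hj⟩ := by
  simp [sgen]

lemma sgen_apply_j1 {n j : ℕ} (hj : j + 1 < n) :
    sgen n j hj ⟨j + 1, hj⟩ = ⟨j, by omega⟩ := by
  simp [sgen]

lemma sgen_inv {n j : ℕ} (hj : j + 1 < n) : (sgen n j hj)⁻¹ = sgen n j hj := by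
  simp [sgen]

lemma len_inv {n : ℕ} (ω : Equiv.Perm (Fin n)) : len ω⁻¹ = len ω := by
  classical
  unfold len
  apply Finset.card_nbij' (i := fun p => (ω⁻¹ p.2, ω⁻¹ p.1)) (j := fun p => (ω p.2, ω p.1)) <;>
    simp +contextual [Prod.ext_iff, Set.MapsTo, Set.LeftInvOn, Set.RightInvOn]

lemma len_one {n : ℕ} : len (1 : Equiv.Perm (Fin n)) = 0 := by
  unfold len
  rw [Finset.card_eq_zero, Finset.filter_eq_empty_iff]
  rintro ⟨a, c⟩ _
  simp only [Equiv.Perm.one_apply]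
  omega

-- dichotomy
lemma len_mul_sgen {n j : ℕ} (hj : j + 1 < n) (ω : Equiv.Perm (Fin n)) :
    (ω ⟨j, by omega⟩ < ω ⟨j+1, hj⟩ → len (ω * sgen n j hj) = len ω + 1) ∧
    (ω ⟨j+1, hj⟩ < ω ⟨j, by omega⟩ → len ω = len (ω * sgen n j hj) + 1) := by
  classical
  set s := sgen n j hj with hs
  set p0 : Fin n × Fin n := (⟨j, by omega⟩, ⟨j+1, hj⟩) with hp0
  set I : Equiv.Perm (Fin n) → Finset (Fin n × Fin n) :=
    fun σ => Finset.univ.filter fun p => p.1 < p.2 ∧ σ p.2 < σ p.1 with hI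
  have hss : ∀ a : Fin n, s (s a) = a := by
    intro a; simp [hs, sgen]
  have hmulap : ∀ (σ : Equiv.Perm (Fin n)) (a : Fin n), (σ * s) a = σ (s a) := fun _ _ => rfl
  have hne : ∀ p : Fin n × Fin n, p.1 < p.2 → p ≠ p0 → ¬(p.1.1 = j ∧ p.2.1 = j + 1) := by
    rintro ⟨a, c⟩ _ hp ⟨h1, h2⟩
    exact hp (by simp only [hp0, Prod.ext_iff, Fin.ext_iff]; exact ⟨h1, h2⟩)
  have hmem : ∀ (σ : Equiv.Perm (Fin n)) (p : Fin n × Fin n),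
      p ∈ (I σ).erase p0 → (s p.1, s p.2) ∈ (I (σ * s)).erase p0 := by
    rintro σ ⟨a, c⟩ hp
    simp only [hI, Finset.mem_erase, Finset.mem_filter, Finset.mem_univ, true_and] at hp ⊢
    obtain ⟨hp0', hac, hσ⟩ := hp
    refine ⟨?_, sgen_lt hj hac (hne _ hac hp0'), ?_⟩
    · intro hcon
      rw [hp0, Prod.ext_iff] at hcon
      simp only at hcon
      obtain ⟨hc1, hc2⟩ := hcon
      have h1 : a = s ⟨j, by omega⟩ := by rw [← hc1, hss]
      have h2 : c = s ⟨j+1, hj⟩ := by rw [← hc2, hss]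
      rw [hs, sgen_apply_j] at h1; rw [hs, sgen_apply_j1] at h2
      rw [h1, h2, Fin.lt_def] at hac; simp at hac
    · rwa [hmulap, hmulap, hss, hss]
  have key : ∀ σ : Equiv.Perm (Fin n), ((I σ).erase p0).card = ((I (σ * s)).erase p0).card := by
    intro σ
    apply Finset.card_nbij' (i := fun p => (s p.1, s p.2)) (j := fun p => (s p.1, s p.2))
    · exact fun p hp => hmem σ p hp
    · intro p hp
      have := hmem (σ * s) p hp
      rwa [mul_assoc, show s * s = 1 from ?_, mul_one] at this
      · ext a; simp [hss, hmulap]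
    · rintro ⟨a, c⟩ _; simp [hss]
    · rintro ⟨a, c⟩ _; simp [hss]
  have hp0mem : ∀ σ : Equiv.Perm (Fin n), p0 ∈ I σ ↔ σ ⟨j+1, hj⟩ < σ ⟨j, by omega⟩ := by
    intro σ
    simp only [hI, hp0, Finset.mem_filter, Finset.mem_univ, true_and, Fin.lt_def]
    simp
  have hsj : (sgen n j hj) ⟨j, by omega⟩ = ⟨j+1, hj⟩ := sgen_apply_j hj
  have hsj1 : (sgen n j hj) ⟨j+1, hj⟩ = ⟨j, by omega⟩ := sgen_apply_j1 hj
  have hlen : ∀ σ : Equiv.Perm (Fin n), len σ = ((I σ).erase p0).card + (if p0 ∈ I σ then 1 else 0) := by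
    intro σ
    by_cases h : p0 ∈ I σ
    · rw [if_pos h, Finset.card_erase_add_one h]; rfl
    · rw [if_neg h, Finset.erase_eq_of_notMem h, add_zero]; rfl
  constructor
  · intro hlt
    have h1 : p0 ∉ I ω := by rw [hp0mem]; exact fun h => absurd hlt (not_lt.2 h.le)
    have h2 : p0 ∈ I (ω * s) := by
      rw [hp0mem, hmulap, hmulap, hs, hsj, hsj1]; exact hlt
    rw [hlen ω, hlen (ω * s), if_pos h2, if_neg h1, key ω]
  · intro hlt
    have h1 : p0 ∈ I ω := by rw [hp0mem]; exact hlt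
    have h2 : p0 ∉ I (ω * s) := by
      rw [hp0mem, hmulap, hmulap, hs, hsj, hsj1]; exact fun h => absurd hlt (not_lt.2 h.le)
    rw [hlen ω, hlen (ω * s), if_pos h1, if_neg h2, key ω]

lemma len_mul_sgen_iff {n j : ℕ} (hj : j + 1 < n) (ω : Equiv.Perm (Fin n)) :
    len (ω * sgen n j hj) = len ω + 1 ↔ ω ⟨j, by omega⟩ < ω ⟨j+1, hj⟩ := by
  constructor
  · intro h
    rcases lt_trichotomy (ω ⟨j, by omega⟩) (ω ⟨j+1, hj⟩) with h1 | h1 | h1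
    · exact h1
    · exact absurd (ω.injective h1) (by simp [Fin.ext_iff])
    · have := (len_mul_sgen hj ω).2 h1
      omega
  · exact (len_mul_sgen hj ω).1

lemma len_sgen_mul {n i : ℕ} (hi : i + 1 < n) (ω : Equiv.Perm (Fin n)) :
    len (sgen n i hi * ω) = len (ω⁻¹ * sgen n i hi) := by
  rw [← len_inv (sgen n i hi * ω), mul_inv_rev, sgen_inv]

lemma len_sgen_mul_iff {n i : ℕ} (hi : i + 1 < n) (ω : Equiv.Perm (Fin n)) :
    len (sgen n i hi * ω) = len ω + 1 ↔ ω⁻¹ ⟨i, by omega⟩ < ω⁻¹ ⟨i+1, hi⟩ := by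
  rw [len_sgen_mul, ← len_inv ω, len_mul_sgen_iff]

lemma len_dichot_right {n j : ℕ} (hj : j + 1 < n) (ω : Equiv.Perm (Fin n)) :
    len (ω * sgen n j hj) = len ω + 1 ∨ len ω = len (ω * sgen n j hj) + 1 := by
  rcases lt_trichotomy (ω ⟨j, by omega⟩) (ω ⟨j+1, hj⟩) with h1 | h1 | h1
  · exact Or.inl ((len_mul_sgen hj ω).1 h1)
  · exact absurd (ω.injective h1) (by simp [Fin.ext_iff])
  · exact Or.inr ((len_mul_sgen hj ω).2 h1)

lemma len_dichot_left {n i : ℕ} (hi : i + 1 < n) (ω : Equiv.Perm (Fin n)) :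
    len (sgen n i hi * ω) = len ω + 1 ∨ len ω = len (sgen n i hi * ω) + 1 := by
  rw [len_sgen_mul, ← len_inv ω]
  exact len_dichot_right hi ω⁻¹

lemma sgen_mul_sgen {n j : ℕ} (hj : j + 1 < n) : sgen n j hj * sgen n j hj = 1 := by
  simp [sgen]

lemma exists_descent {n : ℕ} (ω : Equiv.Perm (Fin n)) (hω : ω ≠ 1) :
    ∃ j, ∃ hj : j + 1 < n, ω ⟨j+1, hj⟩ < ω ⟨j, by omega⟩ := by
  by_contra hcon
  push_neg at hcon
  have step : ∀ (k : ℕ) (h : k + 1 < n), ω ⟨k, by omega⟩ < ω ⟨k+1, h⟩ := by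
    intro k h
    refine lt_of_le_of_ne (hcon k h) fun hc => ?_
    exact absurd (ω.injective hc) (by simp [Fin.ext_iff])
  have chain : ∀ (d a : ℕ) (ha : a + d + 1 < n), ω ⟨a, by omega⟩ < ω ⟨a + d + 1, ha⟩ := by
    intro d
    induction d with
    | zero => exact fun a ha => step a ha
    | succ d ih =>
      intro a ha
      exact lt_trans (ih a (by omega)) (step (a + d + 1) (by omega))
  have hmono : StrictMono ω := by
    intro a c h
    have hac : a.1 < c.1 := h
    have h3 := chain (c.1 - a.1 - 1) a.1 (by omega)
    have e : (⟨a.1 + (c.1 - a.1 - 1) + 1, by omega⟩ : Fin n) = c :=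
      Fin.ext (by show a.1 + (c.1 - a.1 - 1) + 1 = c.1; omega)
    rw [e] at h3; exact h3
  apply hω
  have hid : (ω : Fin n → Fin n) = id := by
    apply (StrictMono.range_inj hmono strictMono_id).1
    simp [Set.range_id, Set.range_eq_univ.2 (Equiv.surjective ω)]
  ext a
  simp [show (ω : Fin n → Fin n) a = id a from congrFun hid a]

lemma exchange {n i j : ℕ} (hi : i + 1 < n) (hj : j + 1 < n) (w : Equiv.Perm (Fin n))
    (h2 : w ⟨j, by omega⟩ < w ⟨j+1, hj⟩)
    (h3 : ¬ sgen n i hi (w ⟨j, by omega⟩) < sgen n i hi (w ⟨j+1, hj⟩)) :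
    sgen n i hi * w = w * sgen n j hj := by
  have hkey : (w ⟨j, by omega⟩).1 = i ∧ (w ⟨j+1, hj⟩).1 = i + 1 := by
    by_contra hcon
    exact h3 (sgen_lt hi h2 hcon)
  have hwj : w ⟨j, by omega⟩ = ⟨i, by omega⟩ := Fin.ext hkey.1
  have hwj1 : w ⟨j+1, hj⟩ = ⟨i+1, hi⟩ := Fin.ext hkey.2
  apply Equiv.ext; intro a
  rw [Equiv.Perm.mul_apply, Equiv.Perm.mul_apply]
  by_cases ha : a = ⟨j, by omega⟩
  · subst ha
    simp only [hwj, sgen_apply_j hi, sgen_apply_j hj, hwj1]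
  · by_cases ha' : a = ⟨j+1, hj⟩
    · subst ha'
      simp only [hwj1, sgen_apply_j1 hi, sgen_apply_j1 hj, hwj]
    · have h5 : sgen n j hj a = a := by
        simp only [sgen]
        rw [Equiv.swap_apply_of_ne_of_ne ha ha']
      rw [h5]
      have h6 : w a ≠ ⟨i, by omega⟩ := fun h => ha (w.injective (h.trans hwj.symm))
      have h7 : w a ≠ ⟨i+1, hi⟩ := fun h => ha' (w.injective (h.trans hwj1.symm))
      simp only [sgen]
      rw [Equiv.swap_apply_of_ne_of_ne h6 h7]

section Algebra
variable {S : Type*} [CommRing S] {A : Type*} [Ring A] [Algebra S A]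
variable {n : ℕ} {β : S} {u : ℕ → A} {b : Module.Basis (Equiv.Perm (Fin n)) S A}

lemma len_sgen {n : ℕ} (i : ℕ) (hi : i + 1 < n) : len (sgen n i hi) = 1 := by
  have h := (len_mul_sgen_iff hi (1 : Equiv.Perm (Fin n))).2
    (by simp [Fin.lt_def])
  rwa [one_mul, len_one] at h

lemma u_eq (hb1 : b 1 = 1)
    (hbmul : ∀ (ω : Equiv.Perm (Fin n)) (i : ℕ) (hi : i + 1 < n),
      (len (ω * sgen n i hi) = len ω + 1 → b ω * u i = b (ω * sgen n i hi)) ∧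
      (len (ω * sgen n i hi) ≠ len ω + 1 → b ω * u i = β • b ω))
    (i : ℕ) (hi : i + 1 < n) : u i = b (sgen n i hi) := by
  have h := (hbmul 1 i hi).1 (by rw [one_mul, len_sgen i hi, len_one])
  rw [hb1, one_mul, one_mul] at h
  exact h

lemma left_mul (hb1 : b 1 = 1)
    (hbmul : ∀ (ω : Equiv.Perm (Fin n)) (i : ℕ) (hi : i + 1 < n),
      (len (ω * sgen n i hi) = len ω + 1 → b ω * u i = b (ω * sgen n i hi)) ∧
      (len (ω * sgen n i hi) ≠ len ω + 1 → b ω * u i = β • b ω)) :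
    ∀ (ω : Equiv.Perm (Fin n)) (i : ℕ) (hi : i + 1 < n),
      (len (sgen n i hi * ω) = len ω + 1 → u i * b ω = b (sgen n i hi * ω)) ∧
      (len (sgen n i hi * ω) ≠ len ω + 1 → u i * b ω = β • b ω) := by
  suffices H : ∀ (N : ℕ) (ω : Equiv.Perm (Fin n)), len ω ≤ N → ∀ (i : ℕ) (hi : i + 1 < n),
      (len (sgen n i hi * ω) = len ω + 1 → u i * b ω = b (sgen n i hi * ω)) ∧
      (len (sgen n i hi * ω) ≠ len ω + 1 → u i * b ω = β • b ω) from
    fun ω i hi => H (len ω) ω le_rfl i hi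
  intro N
  induction N with
  | zero =>
    intro ω hlen i hi
    have hω : ω = 1 := by
      by_contra hω
      obtain ⟨j, hj, hd⟩ := exists_descent ω hω
      have := (len_mul_sgen hj ω).2 hd
      omega
    subst hω
    have h1 : len (sgen n i hi * 1) = len (1 : Equiv.Perm (Fin n)) + 1 := by
      rw [mul_one, len_sgen i hi, len_one]
    refine ⟨fun _ => ?_, fun hne => absurd h1 hne⟩
    rw [hb1, mul_one, u_eq hb1 hbmul i hi, mul_one]
  | succ N ih =>
    intro ω hlen i hi
    by_cases hlN : len ω ≤ N
    · exact ih ω hlN i hi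
    have hω : ω ≠ 1 := by
      intro h; rw [h, len_one] at hlN; omega
    obtain ⟨j, hj, hd⟩ := exists_descent ω hω
    have hlen2 : len ω = len (ω * sgen n j hj) + 1 := (len_mul_sgen hj ω).2 hd
    set ω' := ω * sgen n j hj with hω'def
    have hrec : ω' * sgen n j hj = ω := by
      rw [hω'def, mul_assoc, sgen_mul_sgen hj, mul_one]
    have hb : b ω = b ω' * u j := by
      have h := (hbmul ω' j hj).1 (by rw [hrec]; omega)
      rw [hrec] at h
      exact h.symm
    have IH := ih ω' (by omega) i hi
    by_cases hc : len (sgen n i hi * ω') = len ω' + 1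
    · have hA : u i * b ω' = b (sgen n i hi * ω') := IH.1 hc
      by_cases hdq : len ((sgen n i hi * ω') * sgen n j hj) = len (sgen n i hi * ω') + 1
      · have hmulq := (hbmul (sgen n i hi * ω') j hj).1 hdq
        have hres : u i * b ω = b (sgen n i hi * ω) := by
          rw [hb, ← mul_assoc, hA, hmulq]
          congr 1
          rw [mul_assoc, hrec]
        have hlenres : len (sgen n i hi * ω) = len ω + 1 := by
          have h5 : sgen n i hi * ω = (sgen n i hi * ω') * sgen n j hj := by
            rw [mul_assoc, hrec]
          rw [h5]; omega
        exact ⟨fun _ => hres, fun hne => absurd hlenres hne⟩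
      · have hασ : sgen n i hi * ω' = ω := by
          rw [← hrec]
          apply exchange hi hj ω'
          · exact (len_mul_sgen_iff hj ω').1 (by rw [hrec]; omega)
          · intro hlt
            apply hdq
            exact (len_mul_sgen_iff hj _).2
              (by rw [Equiv.Perm.mul_apply, Equiv.Perm.mul_apply]; exact hlt)
        have hmulq := (hbmul (sgen n i hi * ω') j hj).2 hdq
        have hres : u i * b ω = β • b ω := by
          rw [hb, ← mul_assoc, hA, hmulq, hασ, ← hb]
        have hlenres : len (sgen n i hi * ω) ≠ len ω + 1 := by
          have h5 : sgen n i hi * ω = ω' := by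
            rw [← hrec, ← mul_assoc, hασ, hω'def]
          rw [h5]; omega
        exact ⟨fun h => absurd h hlenres, fun _ => hres⟩
    · have hB : u i * b ω' = β • b ω' := IH.2 hc
      have hres : u i * b ω = β • b ω := by
        rw [hb, ← mul_assoc, hB, smul_mul_assoc]
      have hlen3 : len ω' = len (sgen n i hi * ω') + 1 := by
        rcases len_dichot_left hi ω' with h | h
        · exact absurd h hc
        · exact h
      have hlenres : len (sgen n i hi * ω) ≠ len ω + 1 := by
        have h5 : sgen n i hi * ω = (sgen n i hi * ω') * sgen n j hj := by
          rw [mul_assoc, hrec]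
        rcases len_dichot_right hj (sgen n i hi * ω') with h | h <;> rw [h5] <;> omega
      exact ⟨fun h => absurd h hlenres, fun _ => hres⟩

end Algebra

lemma range_reverse (m : ℕ) :
    (List.range m).reverse = (List.range m).map (fun k => m - 1 - k) := by
  rw [List.range_eq_range', List.reverse_range']
  simp [List.range_eq_range']

section Psi
variable {S : Type*} [CommRing S] {A : Type*} [Ring A] [Algebra S A]
variable {n : ℕ} {β : S} {u : ℕ → A} (b : Module.Basis (Equiv.Perm (Fin n)) S A)

noncomputable def psi : A →ₗ[S] A :=
  Module.Basis.constr b ℕ fun σ => b σ⁻¹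

lemma psi_basis (σ : Equiv.Perm (Fin n)) : psi b (b σ) = b σ⁻¹ :=
  Module.Basis.constr_basis b ℕ _ σ

lemma repr_psi (z : A) (τ : Equiv.Perm (Fin n)) :
    b.repr (psi b z) τ = b.repr z τ⁻¹ := by
  have h : ((Finsupp.lapply τ : (Equiv.Perm (Fin n) →₀ S) →ₗ[S] S)).comp
        ((b.repr : A →ₗ[S] (Equiv.Perm (Fin n) →₀ S)).comp (psi b))
      = ((Finsupp.lapply τ⁻¹ : (Equiv.Perm (Fin n) →₀ S) →ₗ[S] S)).comp
        (b.repr : A →ₗ[S] (Equiv.Perm (Fin n) →₀ S)) := by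
    apply b.ext
    intro σ
    simp only [LinearMap.comp_apply, Finsupp.lapply_apply, psi_basis]
    simp only [LinearEquiv.coe_coe, Module.Basis.repr_self, Finsupp.single_apply]
    by_cases h : σ⁻¹ = τ
    · rw [if_pos h, if_pos (by rw [← h, inv_inv])]
    · rw [if_neg h, if_neg (fun hc => h (by rw [hc, inv_inv]))]
  exact LinearMap.congr_fun h z

end Psi

section Psi2
variable {S : Type*} [CommRing S] {A : Type*} [Ring A] [Algebra S A]
variable {n : ℕ} {β : S} {u : ℕ → A} (b : Module.Basis (Equiv.Perm (Fin n)) S A)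
variable (hb1 : b 1 = 1)
variable (hbmul : ∀ (ω : Equiv.Perm (Fin n)) (i : ℕ) (hi : i + 1 < n),
      (len (ω * sgen n i hi) = len ω + 1 → b ω * u i = b (ω * sgen n i hi)) ∧
      (len (ω * sgen n i hi) ≠ len ω + 1 → b ω * u i = β • b ω))

include hb1 hbmul

lemma psi_mul_u (i : ℕ) (hi : i + 1 < n) (z : A) :
    psi b (z * u i) = u i * psi b z := by
  have h : (psi b).comp (LinearMap.mulRight S (u i))
      = (LinearMap.mulLeft S (u i)).comp (psi b) := by
    apply b.ext
    intro σ
    simp only [LinearMap.comp_apply, LinearMap.mulRight_apply, LinearMap.mulLeft_apply,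
      psi_basis]
    have hlen : len (sgen n i hi * σ⁻¹) = len (σ * sgen n i hi) := by
      rw [len_sgen_mul, inv_inv]
    have hinv : (σ * sgen n i hi)⁻¹ = sgen n i hi * σ⁻¹ := by
      rw [mul_inv_rev, sgen_inv]
    by_cases hc : len (σ * sgen n i hi) = len σ + 1
    · rw [(hbmul σ i hi).1 hc, psi_basis, hinv,
        (left_mul hb1 hbmul σ⁻¹ i hi).1 (by rw [hlen, len_inv]; exact hc)]
    · rw [(hbmul σ i hi).2 hc, map_smul, psi_basis,
        (left_mul hb1 hbmul σ⁻¹ i hi).2 (by rw [hlen, len_inv]; exact hc)]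
  exact LinearMap.congr_fun h z

lemma psi_mul_basis : ∀ (τ : Equiv.Perm (Fin n)) (a : A),
    psi b (a * b τ) = b τ⁻¹ * psi b a := by
  suffices H : ∀ (N : ℕ) (τ : Equiv.Perm (Fin n)), len τ ≤ N → ∀ a : A,
      psi b (a * b τ) = b τ⁻¹ * psi b a from fun τ a => H (len τ) τ le_rfl a
  intro N
  induction N with
  | zero =>
    intro τ hτ a
    have hτ1 : τ = 1 := by
      by_contra hτ1
      obtain ⟨j, hj, hd⟩ := exists_descent τ hτ1
      have := (len_mul_sgen hj τ).2 hd
      omega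
    subst hτ1
    rw [inv_one, hb1, mul_one, one_mul]
  | succ N ih =>
    intro τ hτ a
    by_cases hN : len τ ≤ N
    · exact ih τ hN a
    have hτ1 : τ ≠ 1 := by
      intro h; rw [h, len_one] at hN; omega
    obtain ⟨j, hj, hd⟩ := exists_descent τ hτ1
    have hlen2 : len τ = len (τ * sgen n j hj) + 1 := (len_mul_sgen hj τ).2 hd
    set τ' := τ * sgen n j hj with hτ'def
    have hrec : τ' * sgen n j hj = τ := by
      rw [hτ'def, mul_assoc, sgen_mul_sgen hj, mul_one]
    have hbm : b τ = b τ' * u j := by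
      have h := (hbmul τ' j hj).1 (by rw [hrec]; omega)
      rw [hrec] at h
      exact h.symm
    have hinv : τ⁻¹ = sgen n j hj * τ'⁻¹ := by
      rw [← hrec, mul_inv_rev, sgen_inv]
    have hlast : u j * b τ'⁻¹ = b (sgen n j hj * τ'⁻¹) :=
      (left_mul hb1 hbmul τ'⁻¹ j hj).1 (by
        rw [len_sgen_mul, inv_inv, len_inv, hrec]; omega)
    calc psi b (a * b τ) = psi b ((a * b τ') * u j) := by rw [hbm, mul_assoc]
    _ = u j * psi b (a * b τ') := psi_mul_u b hb1 hbmul j hj _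
    _ = u j * (b τ'⁻¹ * psi b a) := by rw [ih τ' (by omega) a]
    _ = (u j * b τ'⁻¹) * psi b a := by rw [mul_assoc]
    _ = b τ⁻¹ * psi b a := by rw [hlast, ← hinv]

lemma psi_antimul (a c : A) : psi b (a * c) = psi b c * psi b a := by
  have h : (psi b).comp (LinearMap.mulLeft S a)
      = (LinearMap.mulRight S (psi b a)).comp (psi b) := by
    apply b.ext
    intro τ
    simp only [LinearMap.comp_apply, LinearMap.mulLeft_apply, LinearMap.mulRight_apply,
      psi_basis]
    exact psi_mul_basis b hb1 hbmul τ a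
  exact LinearMap.congr_fun h c

lemma psi_one : psi b (1 : A) = 1 := by
  rw [← hb1, psi_basis, inv_one, hb1]

lemma psi_u (i : ℕ) (hi : i + 1 < n) : psi b (u i) = u i := by
  rw [u_eq hb1 hbmul i hi, psi_basis, sgen_inv, ← u_eq hb1 hbmul i hi]

lemma psi_hh (i : ℕ) (hi : i + 1 < n) (t : S) : psi b (hh u i t) = hh u i t := by
  unfold hh
  rw [map_add, map_smul, psi_one b hb1 hbmul, psi_u b hb1 hbmul i hi]

lemma psi_list_prod : ∀ L : List A, psi b L.prod = (L.reverse.map (psi b)).prod := by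
  intro L
  induction L with
  | nil => simpa using psi_one b hb1 hbmul
  | cons a L ihL =>
    rw [List.prod_cons, psi_antimul b hb1 hbmul, List.reverse_cons, List.map_append,
      List.prod_append, ihL]
    simp

end Psi2

section Psi3
variable {S : Type*} [CommRing S] {A : Type*} [Ring A] [Algebra S A]
variable {n : ℕ} {β : S} {u : ℕ → A} (b : Module.Basis (Equiv.Perm (Fin n)) S A)
variable (hb1 : b 1 = 1)
variable (hbmul : ∀ (ω : Equiv.Perm (Fin n)) (i : ℕ) (hi : i + 1 < n),
      (len (ω * sgen n i hi) = len ω + 1 → b ω * u i = b (ω * sgen n i hi)) ∧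
      (len (ω * sgen n i hi) ≠ len ω + 1 → b ω * u i = β • b ω))

include hb1 hbmul

lemma psi_alpha (i : ℕ) (t : S) : psi b (alpha n u i t) = alphaT n u i t := by
  unfold alpha alphaT
  rw [psi_list_prod b hb1 hbmul, ← List.map_reverse, range_reverse, List.map_map,
    List.map_map]
  congr 1
  apply List.map_congr_left
  intro k hk
  rw [List.mem_range] at hk
  simp only [Function.comp_apply]
  have h1 : n - 2 - (n - 1 - i - 1 - k) = i + k := by omega
  rw [h1, psi_hh b hb1 hbmul (i + k) (by omega)]

lemma psi_alphaT (i : ℕ) (t : S) : psi b (alphaT n u i t) = alpha n u i t := by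
  unfold alpha alphaT
  rw [psi_list_prod b hb1 hbmul, ← List.map_reverse, range_reverse, List.map_map,
    List.map_map]
  congr 1
  apply List.map_congr_left
  intro k hk
  rw [List.mem_range] at hk
  simp only [Function.comp_apply]
  have h1 : i + (n - 1 - i - 1 - k) = n - 2 - k := by omega
  rw [h1, psi_hh b hb1 hbmul (n - 2 - k) (by omega)]

lemma psi_Hx (x : ℕ → S) : psi b (Hx n u x) = Ht n u x := by
  unfold Hx Ht
  rw [psi_list_prod b hb1 hbmul, ← List.map_reverse, range_reverse, List.map_map,
    List.map_map]
  congr 1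
  apply List.map_congr_left
  intro i hi
  rw [List.mem_range] at hi
  simp only [Function.comp_apply]
  have h1 : n - 1 - 1 - i = n - 2 - i := by omega
  rw [h1, psi_alpha b hb1 hbmul]

lemma psi_Ht (y : ℕ → S) : psi b (Ht n u y) = Hx n u y := by
  unfold Hx Ht
  rw [psi_list_prod b hb1 hbmul, ← List.map_reverse, range_reverse, List.map_map,
    List.map_map]
  congr 1
  apply List.map_congr_left
  intro i hi
  rw [List.mem_range] at hi
  simp only [Function.comp_apply]
  have h1 : n - 2 - (n - 1 - 1 - i) = i := by omega
  rw [h1, psi_alphaT b hb1 hbmul]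

end Psi3

/-- Symmetry of the double β-polynomials: `𝔥_{ω⁻¹}(x,y) = 𝔥_ω(y,x)`.

The Hecke algebra `A_n^{(β)}` is axiomatised as an algebra `A` over `S` with
generators `u_0, ..., u_{n-2}` satisfying the commutation, braid and Hecke
relations, together with an `S`-basis `(T_ω)_{ω ∈ S_n}` with `T_1 = 1` and the
usual multiplication rule `T_ω u_i = T_{ωs_i}` if `l(ωs_i) = l(ω)+1` and
`T_ω u_i = β T_ω` otherwise.  The double β-polynomial `H_ω(x,y)` is the
coefficient of `T_ω` in `H(x,y) = H̃(y)H(x)`, and the claim is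
`H_{ω⁻¹}(x,y) = H_ω(y,x)`. -/
theorem double_beta_polynomial_symmetry
    {S : Type*} [CommRing S] {A : Type*} [Ring A] [Algebra S A]
    (n : ℕ) (β : S) (u : ℕ → A)
    (hcomm : ∀ i j, i + 2 ≤ j → j ≤ n - 2 → u i * u j = u j * u i)
    (hbraid : ∀ i, i + 1 ≤ n - 2 → u i * u (i + 1) * u i = u (i + 1) * u i * u (i + 1))
    (hsq : ∀ i, i ≤ n - 2 → u i * u i = β • u i)
    (b : Module.Basis (Equiv.Perm (Fin n)) S A)
    (hb1 : b 1 = 1)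
    (hbmul : ∀ (ω : Equiv.Perm (Fin n)) (i : ℕ) (hi : i + 1 < n),
      (len (ω * sgen n i hi) = len ω + 1 → b ω * u i = b (ω * sgen n i hi)) ∧
      (len (ω * sgen n i hi) ≠ len ω + 1 → b ω * u i = β • b ω))
    (x y : ℕ → S) (ω : Equiv.Perm (Fin n)) :
    b.repr (Ht n u y * Hx n u x) ω⁻¹ = b.repr (Ht n u x * Hx n u y) ω := by
  have hψ : psi b (Ht n u y * Hx n u x) = Ht n u x * Hx n u y := by
    rw [psi_antimul b hb1 hbmul, psi_Hx b hb1 hbmul, psi_Ht b hb1 hbmul]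
  rw [← hψ, repr_psi]
end

section
/- In the Hecke algebra A_n^{(β)}, for any two scalars x, y the elements α_i(x) and α_i(y) commute: α_i(x)α_i(y) = α_i(y)α_i(x), where α_i(x) = h_{n-1}(x)···h_i(x). -/
section aux

variable {S : Type*} [CommRing S] {A : Type*} [Ring A] [Algebra S A]

/-- `qprod u i d t = h_{i+d-1}(t) ⋯ h_{i+1}(t) h_i(t)` (a product of `d` factors). -/
noncomputable def qprod (u : ℕ → A) (i : ℕ) : ℕ → S → A
  | 0, _ => 1
  | d + 1, t => hh u (i + d) t * qprod u i d t

private lemma step_comm (x y : S) (a Bx By : A)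
    (hC : Bx * By = By * Bx)
    (hL : y • (Bx * (a * By)) + (x * y) • (a * (Bx * (a * By)))
        - x • (By * (a * Bx)) - (x * y) • (a * (By * (a * Bx)))
        = (y - x) • (a * (Bx * By))) :
    ((1 + x • a) * Bx) * ((1 + y • a) * By) = ((1 + y • a) * By) * ((1 + x • a) * Bx) := by
  have hYX : By * Bx = Bx * By := hC.symm
  simp only [add_mul, mul_add, mul_sub, sub_mul, one_mul, mul_one, smul_mul_assoc,
    mul_smul_comm, smul_smul, mul_assoc, hYX]
  linear_combination (norm := module) hL

private lemma step_L (x y β : S) (a c Bx By : A)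
    (hbr : a * c * a = c * a * c)
    (haa : a * a = β • a)
    (hcc : c * c = β • c)
    (hcx : c * Bx = Bx * c)
    (hcy : c * By = By * c)
    (hC : Bx * By = By * Bx)
    (hL : y • (Bx * (a * By)) + (x * y) • (a * (Bx * (a * By)))
        - x • (By * (a * Bx)) - (x * y) • (a * (By * (a * Bx)))
        = (y - x) • (a * (Bx * By)))
    (hL2 : y • (a * (Bx * (a * By))) - x • (a * (By * (a * Bx)))
        = β • (y • (Bx * (a * By)) - x • (By * (a * Bx)))) :
    y • (((1 + x • a) * Bx) * (c * ((1 + y • a) * By)))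
      + (x * y) • (c * (((1 + x • a) * Bx) * (c * ((1 + y • a) * By))))
      - x • (((1 + y • a) * By) * (c * ((1 + x • a) * Bx)))
      - (x * y) • (c * (((1 + y • a) * By) * (c * ((1 + x • a) * Bx))))
      = (y - x) • (c * (((1 + x • a) * Bx) * ((1 + y • a) * By))) := by
  have hbr' : ∀ z : A, a * (c * (a * z)) = c * (a * (c * z)) := fun z => by
    rw [← mul_assoc, ← mul_assoc, ← mul_assoc, ← mul_assoc, hbr]
  have haa' : ∀ z : A, a * (a * z) = β • (a * z) := fun z => by
    rw [← mul_assoc, haa, smul_mul_assoc]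
  have hcc' : ∀ z : A, c * (c * z) = β • (c * z) := fun z => by
    rw [← mul_assoc, hcc, smul_mul_assoc]
  have hcx' : ∀ z : A, Bx * (c * z) = c * (Bx * z) := fun z => by
    rw [← mul_assoc, ← hcx, mul_assoc]
  have hcy' : ∀ z : A, By * (c * z) = c * (By * z) := fun z => by
    rw [← mul_assoc, ← hcy, mul_assoc]
  have hYX : By * Bx = Bx * By := hC.symm
  have hE2 := congrArg (fun z => c * z) hL
  have hE1 := congrArg (fun z => c * z) hL2
  have hE3 := congrArg (fun z => a * (c * z)) hL
  simp only [mul_add, add_mul, mul_sub, sub_mul, one_mul, mul_one, smul_mul_assoc,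
    mul_smul_comm, smul_smul, mul_assoc, hcx', hcy', hYX, hbr', haa', hcc'] at hE1 hE2 hE3 ⊢
  linear_combination (norm := module) x • hE2 - (x * y) • hE1 + (x * y) • hE3

private lemma step_L2 (x y β : S) (a c Bx By : A)
    (hbr : a * c * a = c * a * c)
    (haa : a * a = β • a)
    (hcc : c * c = β • c)
    (hcx : c * Bx = Bx * c)
    (hcy : c * By = By * c)
    (hC : Bx * By = By * Bx)
    (hL2 : y • (a * (Bx * (a * By))) - x • (a * (By * (a * Bx)))
        = β • (y • (Bx * (a * By)) - x • (By * (a * Bx)))) :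
    y • (c * (((1 + x • a) * Bx) * (c * ((1 + y • a) * By))))
      - x • (c * (((1 + y • a) * By) * (c * ((1 + x • a) * Bx))))
      = β • (y • (((1 + x • a) * Bx) * (c * ((1 + y • a) * By)))
          - x • (((1 + y • a) * By) * (c * ((1 + x • a) * Bx)))) := by
  have hbr' : ∀ z : A, a * (c * (a * z)) = c * (a * (c * z)) := fun z => by
    rw [← mul_assoc, ← mul_assoc, ← mul_assoc, ← mul_assoc, hbr]
  have haa' : ∀ z : A, a * (a * z) = β • (a * z) := fun z => by
    rw [← mul_assoc, haa, smul_mul_assoc]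
  have hcc' : ∀ z : A, c * (c * z) = β • (c * z) := fun z => by
    rw [← mul_assoc, hcc, smul_mul_assoc]
  have hcx' : ∀ z : A, Bx * (c * z) = c * (Bx * z) := fun z => by
    rw [← mul_assoc, ← hcx, mul_assoc]
  have hcy' : ∀ z : A, By * (c * z) = c * (By * z) := fun z => by
    rw [← mul_assoc, ← hcy, mul_assoc]
  have hYX : By * Bx = Bx * By := hC.symm
  have hE4 := congrArg (fun z => a * (c * z)) hL2
  simp only [mul_add, add_mul, mul_sub, sub_mul, one_mul, mul_one, smul_mul_assoc,
    mul_smul_comm, smul_smul, mul_assoc, hcx', hcy', hYX, hbr', haa', hcc'] at hE4 ⊢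
  linear_combination (norm := module) (x * y) • hE4

end aux

/-- In the Hecke algebra `A_n^{(β)}` (generators `u_0, ..., u_{n-2}` with the
commutation, braid and Hecke relations), for any two scalars `x, y` the elements
`α_i(x)` and `α_i(y)` commute: `α_i(x)·α_i(y) = α_i(y)·α_i(x)`. -/
theorem alpha_comm {S : Type*} [CommRing S] {A : Type*} [Ring A] [Algebra S A]
    (n : ℕ) (β : S) (u : ℕ → A)
    (hcomm : ∀ i j, i + 2 ≤ j → j ≤ n - 2 → u i * u j = u j * u i)
    (hbraid : ∀ i, i + 1 ≤ n - 2 → u i * u (i + 1) * u i = u (i + 1) * u i * u (i + 1))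
    (hsq : ∀ i, i ≤ n - 2 → u i * u i = β • u i)
    (i : ℕ) (hi : i ≤ n - 2) (x y : S) :
    alpha n u i x * alpha n u i y = alpha n u i y * alpha n u i x := by
  -- `u j` commutes with `qprod u i d t` when `j ≥ i + d + 1`.
  have qcomm : ∀ (d : ℕ) (t : S) (j : ℕ), i + d + 1 ≤ j → j ≤ n - 2 →
      u j * qprod u i d t = qprod u i d t * u j := by
    intro d
    induction d with
    | zero => intro t j _ _; simp [qprod]
    | succ d ih =>
      intro t j h1 h2
      have hc : u j * (1 + t • u (i + d)) = (1 + t • u (i + d)) * u j := by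
        rw [mul_add, add_mul, mul_one, one_mul, mul_smul_comm, smul_mul_assoc,
          hcomm (i + d) j (by omega) h2]
      show u j * (hh u (i + d) t * qprod u i d t) = hh u (i + d) t * qprod u i d t * u j
      rw [hh, ← mul_assoc, hc, mul_assoc, ih t j (by omega) h2, ← mul_assoc]
  -- the key simultaneous induction
  have key : ∀ d : ℕ,
      (i + d ≤ n - 1 → qprod u i d x * qprod u i d y = qprod u i d y * qprod u i d x)
      ∧ (i + d ≤ n - 2 →
          (y • (qprod u i d x * (u (i + d) * qprod u i d y))
              + (x * y) • (u (i + d) * (qprod u i d x * (u (i + d) * qprod u i d y)))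
              - x • (qprod u i d y * (u (i + d) * qprod u i d x))
              - (x * y) • (u (i + d) * (qprod u i d y * (u (i + d) * qprod u i d x)))
            = (y - x) • (u (i + d) * (qprod u i d x * qprod u i d y)))
          ∧ (y • (u (i + d) * (qprod u i d x * (u (i + d) * qprod u i d y)))
              - x • (u (i + d) * (qprod u i d y * (u (i + d) * qprod u i d x)))
            = β • (y • (qprod u i d x * (u (i + d) * qprod u i d y))
                - x • (qprod u i d y * (u (i + d) * qprod u i d x))))) := by
    intro d
    induction d with
    | zero =>
      refine ⟨fun _ => rfl, fun hg => ⟨?_, ?_⟩⟩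
      · show y • ((1 : A) * (u (i + 0) * 1)) + (x * y) • (u (i + 0) * (1 * (u (i + 0) * 1)))
            - x • ((1 : A) * (u (i + 0) * 1)) - (x * y) • (u (i + 0) * (1 * (u (i + 0) * 1)))
            = (y - x) • (u (i + 0) * (1 * 1))
        simp only [one_mul, mul_one]
        module
      · show y • (u (i + 0) * ((1 : A) * (u (i + 0) * 1)))
            - x • (u (i + 0) * ((1 : A) * (u (i + 0) * 1)))
            = β • (y • ((1 : A) * (u (i + 0) * 1)) - x • ((1 : A) * (u (i + 0) * 1)))
        simp only [one_mul, mul_one]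
        rw [hsq (i + 0) (by omega)]
        module
    | succ d ih =>
      obtain ⟨ihC, ihL⟩ := ih
      constructor
      · intro hg
        have hC := ihC (by omega)
        have hL := (ihL (by omega)).1
        show (hh u (i + d) x * qprod u i d x) * (hh u (i + d) y * qprod u i d y)
            = (hh u (i + d) y * qprod u i d y) * (hh u (i + d) x * qprod u i d x)
        rw [hh]
        exact step_comm x y (u (i + d)) (qprod u i d x) (qprod u i d y) hC hL
      · intro hg
        have hC := ihC (by omega)
        have hL := (ihL (by omega)).1
        have hL2 := (ihL (by omega)).2
        have hbr := hbraid (i + d) (by omega)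
        have haa := hsq (i + d) (by omega)
        have hcc := hsq (i + d + 1) (by omega)
        have hcx := qcomm d x (i + d + 1) (by omega) (by omega)
        have hcy := qcomm d y (i + d + 1) (by omega) (by omega)
        constructor
        · show y • ((hh u (i + d) x * qprod u i d x) * (u (i + d + 1) * (hh u (i + d) y * qprod u i d y)))
              + (x * y) • (u (i + d + 1) * ((hh u (i + d) x * qprod u i d x) * (u (i + d + 1) * (hh u (i + d) y * qprod u i d y))))
              - x • ((hh u (i + d) y * qprod u i d y) * (u (i + d + 1) * (hh u (i + d) x * qprod u i d x)))
              - (x * y) • (u (i + d + 1) * ((hh u (i + d) y * qprod u i d y) * (u (i + d + 1) * (hh u (i + d) x * qprod u i d x))))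
              = (y - x) • (u (i + d + 1) * ((hh u (i + d) x * qprod u i d x) * (hh u (i + d) y * qprod u i d y)))
          rw [hh]
          exact step_L x y β (u (i + d)) (u (i + d + 1)) (qprod u i d x) (qprod u i d y)
            hbr haa hcc hcx hcy hC hL hL2
        · show y • (u (i + d + 1) * ((hh u (i + d) x * qprod u i d x) * (u (i + d + 1) * (hh u (i + d) y * qprod u i d y))))
              - x • (u (i + d + 1) * ((hh u (i + d) y * qprod u i d y) * (u (i + d + 1) * (hh u (i + d) x * qprod u i d x))))
              = β • (y • ((hh u (i + d) x * qprod u i d x) * (u (i + d + 1) * (hh u (i + d) y * qprod u i d y)))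
                  - x • ((hh u (i + d) y * qprod u i d y) * (u (i + d + 1) * (hh u (i + d) x * qprod u i d x))))
          rw [hh]
          exact step_L2 x y β (u (i + d)) (u (i + d + 1)) (qprod u i d x) (qprod u i d y)
            hbr haa hcc hcx hcy hC hL2
  -- identify `alpha` with `qprod`
  have qlist : ∀ (d : ℕ) (t : S),
      qprod u i d t = ((List.range d).map fun k => hh u (i + d - 1 - k) t).prod := by
    intro d
    induction d with
    | zero => intro t; simp [qprod]
    | succ d ih =>
      intro t
      show hh u (i + d) t * qprod u i d t = _
      rw [List.range_succ_eq_map, List.map_cons, List.map_map, List.prod_cons, ih t]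
      rw [show i + (d + 1) - 1 - 0 = i + d from by omega]
      congr 2
      apply List.map_congr_left
      intro k _
      simp only [Function.comp_apply]
      exact congrArg (fun j => hh u j t) (by omega)
  have halpha : ∀ t : S, alpha n u i t = qprod u i (n - 1 - i) t := by
    intro t
    rw [alpha, qlist]
    congr 1
    apply List.map_congr_left
    intro k hk
    simp only [List.mem_range] at hk
    exact congrArg (fun j => hh u j t) (by omega)
  rw [halpha, halpha]
  exact (key (n - 1 - i)).1 (by omega)
end
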